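/- Let Ω ⊂ ℝⁿ be a measurable set of finite Lebesgue measure |Ω|, let 0 < ε < 1, and let p, q : Ω → ℝ be measurable functions with 1 ≤ p(x) ≤ q(x) ≤ p(x) + ε for a.e. x ∈ Ω. Then for every measurable function f : Ω → ℝ one has (as an inequality in [0,∞]): ∫_Ω p(x)^{−1} |f(x)|^{p(x)} dx ≤ ε |Ω| + ε^{−ε} (1 + ε) ∫_Ω q(x)^{−1} |f(x)|^{q(x)} dx. -/

import Mathlib

open MeasureTheory ENNReal Filter

lemma key_pointwise {ε p q t : ℝ} (hε0 : 0 < ε) (hε1 : ε < 1)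
    (hp : 1 ≤ p) (hpq : p ≤ q) (hqe : q ≤ p + ε) (ht : 0 ≤ t) :
    p⁻¹ * t ^ p ≤ ε + ε ^ (-ε) * (1 + ε) * (q⁻¹ * t ^ q) := by
  have hp0 : 0 < p := lt_of_lt_of_le one_pos hp
  have hq0 : 0 < q := lt_of_lt_of_le hp0 hpq
  by_cases h : t ^ p ≤ ε * p
  · have h1 : p⁻¹ * t ^ p ≤ ε := by
      rw [inv_mul_le_iff₀ hp0]; linarith
    have h2 : 0 ≤ ε ^ (-ε) * (1 + ε) * (q⁻¹ * t ^ q) := by positivity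
    linarith
  · push_neg at h
    have hεp : ε ≤ ε * p := le_mul_of_one_le_right hε0.le hp
    have hεt : ε < t ^ p := lt_of_le_of_lt hεp h
    have hb : ε ^ p⁻¹ < t := by
      have : (ε ^ p⁻¹) ^ p < t ^ p := by
        rwa [Real.rpow_inv_rpow hε0.le hp0.ne']
      exact (Real.rpow_lt_rpow_iff (by positivity) ht hp0).mp this
    have ht0 : 0 < t := lt_of_le_of_lt (by positivity) hb
    -- t ^ (p - q) ≤ ε ^ (-ε)
    have h3 : t ^ (p - q) ≤ ε ^ (-ε) := by
      calc t ^ (p - q) ≤ (ε ^ p⁻¹) ^ (p - q) :=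
            Real.rpow_le_rpow_of_nonpos (by positivity) hb.le (by linarith)
        _ = ε ^ (p⁻¹ * (p - q)) := (Real.rpow_mul hε0.le _ _).symm
        _ ≤ ε ^ (-ε) := by
            apply Real.rpow_le_rpow_of_exponent_ge hε0 hε1.le
            have h4 : p⁻¹ * (p - q) ≥ p - q := by
              have hinv : p⁻¹ ≤ 1 := by
                rw [inv_le_one_iff₀]; right; exact hp
              nlinarith [sub_nonpos.mpr hpq]
            linarith
    -- q * p⁻¹ ≤ 1 + ε
    have h5 : q * p⁻¹ ≤ 1 + ε := by
      rw [mul_inv_le_iff₀ hp0]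
      nlinarith
    have h6 : p⁻¹ * t ^ p = (q * p⁻¹) * t ^ (p - q) * (q⁻¹ * t ^ q) := by
      have h7 : t ^ (p - q) * t ^ q = t ^ p := by
        rw [← Real.rpow_add ht0]; ring_nf
      rw [← h7]; field_simp
    calc p⁻¹ * t ^ p = (q * p⁻¹) * t ^ (p - q) * (q⁻¹ * t ^ q) := h6
      _ ≤ (1 + ε) * ε ^ (-ε) * (q⁻¹ * t ^ q) := by
          apply mul_le_mul_of_nonneg_right _ (by positivity)
          apply mul_le_mul h5 h3 (by positivity) (by positivity)
      _ = ε ^ (-ε) * (1 + ε) * (q⁻¹ * t ^ q) := by ring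
      _ ≤ ε + ε ^ (-ε) * (1 + ε) * (q⁻¹ * t ^ q) := by linarith

lemma measurable_rpow_of_nonneg {α : Type*} [MeasurableSpace α] {g h : α → ℝ}
    (hg : Measurable g) (hh : Measurable h) (hg0 : ∀ x, 0 ≤ g x) :
    Measurable fun x => g x ^ h x := by
  have heq : (fun x => g x ^ h x) =
      fun x => if g x = 0 then (if h x = 0 then 1 else 0)
               else Real.exp (Real.log (g x) * h x) := by
    funext x
    by_cases h1 : g x = 0
    · rw [if_pos h1, h1]
      by_cases h2 : h x = 0
      · rw [if_pos h2, h2, Real.rpow_zero]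
      · rw [if_neg h2, Real.zero_rpow h2]
    · rw [if_neg h1, Real.rpow_def_of_pos (lt_of_le_of_ne (hg0 x) (Ne.symm h1))]
  rw [heq]
  exact Measurable.ite (hg (measurableSet_singleton 0))
    (Measurable.ite (hh (measurableSet_singleton 0)) measurable_const measurable_const)
    ((hg.log.mul hh).exp)

/-- If `1 ≤ p ≤ q ≤ p + ε` a.e. on a finite-measure set `Ω`, with `0 < ε < 1`, then for any
measurable `f` one has, in `[0,∞]`,
`∫_Ω p(x)⁻¹|f|^{p(x)} dx ≤ ε|Ω| + ε^{-ε}(1+ε) ∫_Ω q(x)⁻¹|f|^{q(x)} dx`. -/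
theorem weighted_modular_estimate_close_exponents {n : ℕ}
    (Ω : Set (EuclideanSpace ℝ (Fin n))) (hΩ : MeasurableSet Ω)
    (hΩfin : volume Ω < ⊤)
    (ε : ℝ) (hε0 : 0 < ε) (hε1 : ε < 1)
    (p q : EuclideanSpace ℝ (Fin n) → ℝ)
    (hp : Measurable p) (hq : Measurable q)
    (hpq : ∀ᵐ x ∂(volume.restrict Ω), 1 ≤ p x ∧ p x ≤ q x ∧ q x ≤ p x + ε)
    (f : EuclideanSpace ℝ (Fin n) → ℝ) (hf : Measurable f) :
    (∫⁻ x in Ω, ENNReal.ofReal ((p x)⁻¹ * |f x| ^ (p x))) ≤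
      ENNReal.ofReal ε * volume Ω +
        ENNReal.ofReal (ε ^ (-ε) * (1 + ε)) *
          ∫⁻ x in Ω, ENNReal.ofReal ((q x)⁻¹ * |f x| ^ (q x)) := by
  have hmeas : Measurable fun x => ENNReal.ofReal ((q x)⁻¹ * |f x| ^ (q x)) := by
    apply ENNReal.measurable_ofReal.comp
    exact hq.inv.mul (measurable_rpow_of_nonneg hf.abs hq fun x => abs_nonneg _)
  calc (∫⁻ x in Ω, ENNReal.ofReal ((p x)⁻¹ * |f x| ^ (p x)))
      ≤ ∫⁻ x in Ω, (ENNReal.ofReal ε +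
          ENNReal.ofReal (ε ^ (-ε) * (1 + ε)) * ENNReal.ofReal ((q x)⁻¹ * |f x| ^ (q x))) := by
        apply lintegral_mono_ae
        filter_upwards [hpq] with x ⟨h1, h2, h3⟩
        have key := key_pointwise hε0 hε1 h1 h2 h3 (abs_nonneg (f x))
        calc ENNReal.ofReal ((p x)⁻¹ * |f x| ^ (p x))
            ≤ ENNReal.ofReal (ε + ε ^ (-ε) * (1 + ε) * ((q x)⁻¹ * |f x| ^ (q x))) :=
              ENNReal.ofReal_le_ofReal key
          _ ≤ ENNReal.ofReal ε + ENNReal.ofReal (ε ^ (-ε) * (1 + ε) * ((q x)⁻¹ * |f x| ^ (q x))) :=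
              ENNReal.ofReal_add_le
          _ = ENNReal.ofReal ε +
              ENNReal.ofReal (ε ^ (-ε) * (1 + ε)) * ENNReal.ofReal ((q x)⁻¹ * |f x| ^ (q x)) := by
              rw [ENNReal.ofReal_mul (by positivity)]
    _ = ENNReal.ofReal ε * volume Ω +
        ENNReal.ofReal (ε ^ (-ε) * (1 + ε)) *
          ∫⁻ x in Ω, ENNReal.ofReal ((q x)⁻¹ * |f x| ^ (q x)) := by
        rw [lintegral_add_left measurable_const, lintegral_const_mul _ hmeas,
          lintegral_const, Measure.restrict_apply MeasurableSet.univ, Set.univ_inter]
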